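/- For all n ≥ 1 and k ≥ 0, 0 < c_n^{(k)} ≤ n, i.e. the Roman harmonic numbers of positive degree are positive and bounded by their degree. -/

import Mathlib

/-- Roman harmonic number `c_n^{(k)}` as a rational number. -/
def romanHarmonic (n k : ℕ) : ℚ :=
  ∑ j ∈ Finset.Icc 1 n, (-1 : ℚ) ^ (j - 1) * (n.choose j) / (j : ℚ) ^ k

open Finset

lemma rh_zero (n : ℕ) (hn : 1 ≤ n) : romanHarmonic n 0 = 1 := by
  have hint := Int.alternating_sum_range_choose_of_ne (n := n) (by omega)
  have hq : ∑ i ∈ range (n + 1), (-1 : ℚ) ^ i * (n.choose i) = 0 := by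
    exact_mod_cast congrArg (fun z : ℤ => (z : ℚ)) hint
  have hsplit : range (n + 1) = insert 0 (Icc 1 n) := by
    ext x; simp [Finset.mem_range, Finset.mem_Icc]; omega
  rw [hsplit, Finset.sum_insert (by simp)] at hq
  simp only [pow_zero, Nat.choose_zero_right, Nat.cast_one, one_mul] at hq
  have hneg : ∑ j ∈ Icc 1 n, (-1 : ℚ) ^ (j - 1) * (n.choose j)
      = -∑ j ∈ Icc 1 n, (-1 : ℚ) ^ j * (n.choose j) := by
    rw [← Finset.sum_neg_distrib]
    apply Finset.sum_congr rfl
    intro j hj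
    simp only [Finset.mem_Icc] at hj
    obtain ⟨m, rfl⟩ := Nat.exists_eq_add_of_le hj.1
    simp [pow_succ, pow_add]
  unfold romanHarmonic
  simp only [pow_zero, div_one]
  rw [hneg]
  linarith

lemma rh_term (n k m : ℕ) :
    (-1 : ℚ) ^ m * (((n + 1).choose (m + 1) : ℕ)) / ((m : ℚ) + 1) ^ (k + 1)
      = (-1 : ℚ) ^ m * ((n.choose (m + 1) : ℕ)) / ((m : ℚ) + 1) ^ (k + 1)
        + ((-1 : ℚ) ^ m * (((n + 1).choose (m + 1) : ℕ)) / ((m : ℚ) + 1) ^ k) / ((n : ℚ) + 1) := by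
  have h1 : (((n + 1).choose (m + 1) : ℕ) : ℚ) = n.choose m + n.choose (m + 1) := by
    exact_mod_cast Nat.choose_succ_succ n m
  have h2 : ((n : ℚ) + 1) * (n.choose m : ℕ) = (((n + 1).choose (m + 1) : ℕ)) * ((m : ℚ) + 1) := by
    exact_mod_cast Nat.add_one_mul_choose_eq n m
  have key : (((n + 1).choose (m + 1) : ℕ) : ℚ) * ((n : ℚ) + 1)
      = (n.choose (m + 1) : ℕ) * ((n : ℚ) + 1) + (((n + 1).choose (m + 1) : ℕ)) * ((m : ℚ) + 1) := by
    linear_combination h2 + ((n : ℚ) + 1) * h1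
  have hm : ((m : ℚ) + 1) ≠ 0 := by positivity
  have hn1 : ((n : ℚ) + 1) ≠ 0 := by positivity
  have gen : ∀ a b : ℚ, a * ((n : ℚ) + 1) = b * ((n : ℚ) + 1) + a * ((m : ℚ) + 1) →
      a / ((m : ℚ) + 1) = b / ((m : ℚ) + 1) + a / ((n : ℚ) + 1) := by
    intro a b h
    field_simp
    linear_combination h
  rw [pow_succ, ← div_div, ← div_div]
  apply gen
  linear_combination ((-1 : ℚ) ^ m / ((m : ℚ) + 1) ^ k) * key

lemma rh_rec (n k : ℕ) :
    romanHarmonic (n + 1) (k + 1)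
      = romanHarmonic n (k + 1) + romanHarmonic (n + 1) k / (n + 1) := by
  have hterm : ∀ j ∈ Icc 1 (n + 1),
      (-1 : ℚ) ^ (j - 1) * ((n + 1).choose j) / (j : ℚ) ^ (k + 1)
        = (-1 : ℚ) ^ (j - 1) * (n.choose j) / (j : ℚ) ^ (k + 1)
          + ((-1 : ℚ) ^ (j - 1) * ((n + 1).choose j) / (j : ℚ) ^ k) / ((n : ℚ) + 1) := by
    intro j hj
    simp only [Finset.mem_Icc] at hj
    obtain ⟨m, rfl⟩ : ∃ m, j = m + 1 := ⟨j - 1, by omega⟩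
    have := rh_term n k m
    simpa using this
  unfold romanHarmonic
  rw [Finset.sum_congr rfl hterm, Finset.sum_add_distrib, ← Finset.sum_div]
  have hins : Icc 1 (n + 1) = insert (n + 1) (Icc 1 n) := by
    ext x; simp [Finset.mem_Icc]; omega
  congr 1
  · rw [hins, Finset.sum_insert (by simp)]
    simp [Nat.choose_succ_self]

theorem roman_harmonic_pos_le (n k : ℕ) (hn : 1 ≤ n) :
    0 < romanHarmonic n k ∧ romanHarmonic n k ≤ (n : ℚ) := by
  induction k generalizing n with
  | zero =>
    rw [rh_zero n hn]
    exact ⟨one_pos, by exact_mod_cast hn⟩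
  | succ k ih =>
    induction n, hn using Nat.le_induction with
    | base =>
      have h1 : romanHarmonic 1 (k + 1) = 1 := by
        simp [romanHarmonic]
      rw [h1]
      exact ⟨one_pos, by norm_num⟩
    | succ m hm ihm =>
      obtain ⟨h1, h2⟩ := ihm
      obtain ⟨h3, h4⟩ := ih (m + 1) (by omega)
      rw [rh_rec]
      have hpos : (0 : ℚ) < (m : ℚ) + 1 := by positivity
      have hdivpos : 0 < romanHarmonic (m + 1) k / ((m : ℚ) + 1) :=
        div_pos h3 hpos
      have hdivle : romanHarmonic (m + 1) k / ((m : ℚ) + 1) ≤ 1 := by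
        rw [div_le_one hpos]
        exact_mod_cast h4
      push_cast
      constructor <;> linarith
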